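/- In the ring of Laurent polynomials \mathbb{Z}[x, x^{-1}], for every natural number n one has (x + x^{-1})^n \cdot (x - x^{-1}) = \sum_l C(n, (n+1-l)/2) \cdot (x^l - x^{-l}), where l runs over the integers with 1 \le l \le n+1 and l \equiv n+1 \pmod 2. -/

import Mathlib

/-- `binZ n j` is the binomial coefficient `n choose j` for `j : ℤ`, which is `0`
unless `0 ≤ j ≤ n`. -/
def binZ (n : ℕ) (j : ℤ) : ℤ := if 0 ≤ j then (n.choose j.toNat : ℤ) else 0

/-- `catC n j = C(n,j) = binom(n,j) - binom(n,j-1)`. -/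
def catC (n : ℕ) (j : ℤ) : ℤ := binZ n j - binZ n (j - 1)

lemma binZ_neg (n : ℕ) (j : ℤ) (h : j < 0) : binZ n j = 0 := by
  unfold binZ; rw [if_neg (by omega)]

lemma binZ_hi (n : ℕ) (j : ℤ) (h : (n:ℤ) < j) : binZ n j = 0 := by
  unfold binZ; rw [if_pos (by omega), Nat.choose_eq_zero_of_lt (by omega), Nat.cast_zero]

lemma catC_out (n : ℕ) (j : ℤ) (h : j < 0 ∨ (n:ℤ) + 1 < j) : catC n j = 0 := by
  unfold catC
  rcases h with h | h
  · rw [binZ_neg n j h, binZ_neg n _ (by omega)]; ring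
  · rw [binZ_hi n j (by omega), binZ_hi n _ (by omega)]; ring

lemma binZ_symm (n : ℕ) (j : ℤ) : binZ n ((n:ℤ) - j) = binZ n j := by
  unfold binZ
  rcases lt_trichotomy j 0 with h | h | h
  · rw [if_pos (by omega), if_neg (by omega)]
    rw [Nat.choose_eq_zero_of_lt (by omega)]
    simp
  · simp [h]
  · rcases le_or_gt j n with h2 | h2
    · rw [if_pos (by omega), if_pos (by omega)]
      have : ((n:ℤ) - j).toNat = n - j.toNat := by omega
      rw [this, Nat.choose_symm (by omega)]
    · rw [if_neg (by omega), if_pos (by omega)]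
      rw [Nat.choose_eq_zero_of_lt (by omega), Nat.cast_zero]

lemma catC_neg (n : ℕ) (j : ℤ) : catC n ((n:ℤ) + 1 - j) = - catC n j := by
  unfold catC
  have h1 : (n:ℤ) + 1 - j = (n:ℤ) - (j - 1) := by ring
  have h2 : (n:ℤ) - (j - 1) - 1 = (n:ℤ) - j := by ring
  rw [h1, h2, binZ_symm, binZ_symm]
  ring

lemma catC_mid (n k : ℕ) (h : 2 * k = n + 1) : catC n (k : ℤ) = 0 := by
  unfold catC binZ
  rw [if_pos (by omega), if_pos (by omega)]
  have h1 : ((k:ℤ)).toNat = k := by omega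
  have h2 : ((k:ℤ) - 1).toNat = k - 1 := by omega
  rw [h1, h2]
  have : k - 1 = n - k := by omega
  rw [this, Nat.choose_symm (by omega)]
  ring

lemma binZ_pascal (n : ℕ) (j : ℤ) : binZ (n+1) j = binZ n j + binZ n (j - 1) := by
  unfold binZ
  rcases lt_trichotomy j 0 with h | h | h
  · rw [if_neg (by omega), if_neg (by omega), if_neg (by omega)]; ring
  · subst h
    rw [if_pos le_rfl, if_pos le_rfl, if_neg (by omega)]
    simp
  · rw [if_pos (by omega), if_pos (by omega), if_pos (by omega)]
    have h1 : j.toNat = (j-1).toNat + 1 := by omega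
    rw [h1, Nat.choose_succ_succ]
    push_cast; ring

lemma catC_pascal (n : ℕ) (j : ℤ) : catC (n+1) j = catC n j + catC n (j - 1) := by
  unfold catC
  rw [binZ_pascal, binZ_pascal]
  ring

open LaurentPolynomial in
lemma lhs_canon (n : ℕ) :
    ((T 1 + T (-1) : LaurentPolynomial ℤ)) ^ n * (T 1 - T (-1)) =
      ∑ k ∈ Finset.range (n + 2), catC n k • T ((n:ℤ) + 1 - 2 * k) := by
  induction n with
  | zero =>
    simp [catC, binZ]
    rw [Finset.sum_range_succ, Finset.sum_range_one]
    norm_num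
    abel
  | succ n ih =>
    have key : ((T 1 + T (-1) : LaurentPolynomial ℤ)) ^ (n+1) * (T 1 - T (-1)) =
        (T 1 + T (-1)) * (((T 1 + T (-1) : LaurentPolynomial ℤ)) ^ n * (T 1 - T (-1))) := by
      ring
    rw [key, ih, Finset.mul_sum]
    have lhseq : ∀ k ∈ Finset.range (n+2),
        (T 1 + T (-1) : LaurentPolynomial ℤ) * (catC n k • T ((n:ℤ) + 1 - 2 * k)) =
        catC n k • T ((n:ℤ) + 2 - 2 * k) + catC n k • T ((n:ℤ) - 2 * k) := by
      intro k _
      rw [mul_smul_comm, ← smul_add, add_mul, ← T_add, ← T_add]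
      ring_nf
    rw [Finset.sum_congr rfl lhseq, Finset.sum_add_distrib]
    have rhseq : ∀ k ∈ Finset.range (n+3),
        catC (n+1) k • (T ((n:ℤ) + 1 + 1 - 2 * k) : LaurentPolynomial ℤ) =
        catC n k • T ((n:ℤ) + 2 - 2 * k) + catC n ((k:ℤ) - 1) • T ((n:ℤ) + 2 - 2 * k) := by
      intro k _
      rw [catC_pascal, add_smul]
      have h2 : (n:ℤ) + 1 + 1 = (n:ℤ) + 2 := by ring
      rw [h2]
    push_cast
    rw [Finset.sum_congr rfl rhseq, Finset.sum_add_distrib]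
    congr 1
    · symm
      rw [Finset.sum_range_succ]
      have hz : catC n (((n+2:ℕ):ℤ)) = 0 := catC_out n _ (by push_cast; omega)
      rw [hz]
      simp
    · symm
      rw [Finset.sum_range_succ']
      have h0 : catC n ((0:ℕ) - 1 : ℤ) = 0 := catC_out n _ (by omega)
      push_cast at h0 ⊢
      rw [h0, zero_smul, add_zero]
      apply Finset.sum_congr rfl
      intro k _
      have h1 : ((k:ℤ) + 1 : ℤ) - 1 = (k:ℤ) := by ring
      have h2 : ((n:ℤ) + 2 - 2 * ((k:ℤ)+1) : ℤ) = (n:ℤ) - 2 * (k:ℤ) := by ring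
      rw [h1, h2]

open LaurentPolynomial Finset in
lemma canon_eq_rhs (n : ℕ) :
    ∑ k ∈ Finset.range (n + 2), catC n k • (T ((n:ℤ) + 1 - 2 * k) : LaurentPolynomial ℤ) =
      ∑ l ∈ Finset.Icc 1 (n + 1),
        if l % 2 = (n + 1) % 2 then
          catC n (((n : ℤ) + 1 - l) / 2) • ((T (l : ℤ) - T (-(l : ℤ))) : LaurentPolynomial ℤ)
        else 0 := by
  rw [← Finset.sum_filter]
  set S := (Finset.Icc 1 (n+1)).filter (fun l => l % 2 = (n+1) % 2) with hS
  have hSmem : ∀ l, l ∈ S ↔ (1 ≤ l ∧ l ≤ n + 1 ∧ l % 2 = (n+1) % 2) := by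
    intro l; simp [hS, Finset.mem_filter, Finset.mem_Icc, and_assoc]
  rw [← Finset.sum_filter_add_sum_filter_not (Finset.range (n+2)) (fun k => 2*k ≤ n)]
  have hB : ∑ k ∈ (Finset.range (n+2)).filter (fun k => ¬ 2*k ≤ n),
        catC n k • (T ((n:ℤ) + 1 - 2 * k) : LaurentPolynomial ℤ)
      = ∑ k ∈ (Finset.range (n+2)).filter (fun k => n + 2 ≤ 2*k),
        catC n k • (T ((n:ℤ) + 1 - 2 * k) : LaurentPolynomial ℤ) := by
    symm
    apply Finset.sum_subset
    · intro k hk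
      simp only [Finset.mem_filter, Finset.mem_range] at hk ⊢
      omega
    · intro k hk hk2
      simp only [Finset.mem_filter, Finset.mem_range] at hk hk2
      have : 2 * k = n + 1 := by omega
      rw [catC_mid n k this, zero_smul]
  rw [hB]
  have h1 : ∑ k ∈ (Finset.range (n+2)).filter (fun k => 2*k ≤ n),
        catC n k • (T ((n:ℤ) + 1 - 2 * k) : LaurentPolynomial ℤ)
      = ∑ l ∈ S, catC n (((n : ℤ) + 1 - l) / 2) • (T (l : ℤ) : LaurentPolynomial ℤ) := by
    apply Finset.sum_nbij' (fun k => n + 1 - 2 * k) (fun l => (n + 1 - l) / 2)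
    · intro k hk
      simp only [Finset.mem_filter, Finset.mem_range] at hk
      rw [hSmem]; omega
    · intro l hl
      rw [hSmem] at hl
      simp only [Finset.mem_filter, Finset.mem_range]
      omega
    · intro k hk
      simp only [Finset.mem_filter, Finset.mem_range] at hk
      omega
    · intro l hl
      rw [hSmem] at hl
      omega
    · intro k hk
      simp only [Finset.mem_filter, Finset.mem_range] at hk
      have e1 : ((n : ℤ) + 1 - ((n + 1 - 2*k : ℕ) : ℤ)) / 2 = (k : ℤ) := by
        have : ((n + 1 - 2*k : ℕ) : ℤ) = (n:ℤ) + 1 - 2*k := by omega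
        rw [this]; ring_nf; omega
      have e2 : ((n + 1 - 2*k : ℕ) : ℤ) = (n:ℤ) + 1 - 2 * k := by omega
      rw [e1, e2]
  have h2 : ∑ k ∈ (Finset.range (n+2)).filter (fun k => n + 2 ≤ 2*k),
        catC n k • (T ((n:ℤ) + 1 - 2 * k) : LaurentPolynomial ℤ)
      = ∑ l ∈ S, -(catC n (((n : ℤ) + 1 - l) / 2) • (T (-(l : ℤ)) : LaurentPolynomial ℤ)) := by
    apply Finset.sum_nbij' (fun k => 2 * k - (n + 1)) (fun l => (n + 1 + l) / 2)
    · intro k hk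
      simp only [Finset.mem_filter, Finset.mem_range] at hk
      rw [hSmem]; omega
    · intro l hl
      rw [hSmem] at hl
      simp only [Finset.mem_filter, Finset.mem_range]
      omega
    · intro k hk
      simp only [Finset.mem_filter, Finset.mem_range] at hk
      omega
    · intro l hl
      rw [hSmem] at hl
      omega
    · intro k hk
      simp only [Finset.mem_filter, Finset.mem_range] at hk
      have e1 : ((n : ℤ) + 1 - ((2*k - (n+1) : ℕ) : ℤ)) / 2 = (n:ℤ) + 1 - k := by
        have : ((2*k - (n+1) : ℕ) : ℤ) = 2*(k:ℤ) - (n+1) := by omega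
        rw [this]; ring_nf; omega
      have e2 : -((2*k - (n+1) : ℕ) : ℤ) = (n:ℤ) + 1 - 2 * k := by omega
      rw [e1, e2, catC_neg, neg_smul, neg_neg]
  rw [h1, h2, ← Finset.sum_add_distrib]
  apply Finset.sum_congr rfl
  intro l _
  rw [smul_sub]
  ring

open LaurentPolynomial in
/-- In `ℤ[x,x⁻¹]`, `(x + x⁻¹)^n (x - x⁻¹) = ∑_l C(n,(n+1-l)/2) (x^l - x^{-l})`, the sum
over integers `1 ≤ l ≤ n+1` with `l ≡ n+1 (mod 2)`. -/
theorem laurent_catalan_expansion (n : ℕ) :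
    ((T 1 + T (-1) : LaurentPolynomial ℤ)) ^ n * (T 1 - T (-1)) =
      ∑ l ∈ Finset.Icc 1 (n + 1),
        if l % 2 = (n + 1) % 2 then
          catC n (((n : ℤ) + 1 - l) / 2) • ((T (l : ℤ) - T (-(l : ℤ))) : LaurentPolynomial ℤ)
        else 0 := by
  rw [lhs_canon n, canon_eq_rhs n]
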